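/- Let F ⊆ R⟨X⟩ and let f lie in the two-sided ideal (F). Then for every labelled quiver Q such that all elements of F are uniformly compatible with Q, f is compatible with Q if and only if f is a Q-consequence of F. -/

import Mathlib

open scoped BigOperators

/-- The free `R`-algebra `R⟨X⟩` on `X`, as the monoid algebra over `R`
of the free monoid `⟨X⟩` of words over `X`. -/
abbrev FreeAlg (R X : Type*) [CommRing R] := MonoidAlgebra R (FreeMonoid X)

/-- The monomial in `R⟨X⟩` corresponding to a word `m ∈ ⟨X⟩`. -/
noncomputable def monom (R : Type*) [CommRing R] {X : Type*} (m : FreeMonoid X) : FreeAlg R X :=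
  MonoidAlgebra.of R (FreeMonoid X) m

/-- `h` is obtained from `f` by a rewriting step using `g`: some monomial `m_g` in the
support of `g` divides a monomial `a·m_g·b` in the support of `f`, and
`h = f + λ·a·g·b` for some `λ ∈ R`. -/
def RewriteStep {R X : Type*} [CommRing R] (g f h : FreeAlg R X) : Prop :=
  ∃ (a b mg : FreeMonoid X) (lam : R),
    mg ∈ (g.coeff : FreeMonoid X →₀ R).support ∧
    a * mg * b ∈ (f.coeff : FreeMonoid X →₀ R).support ∧
    h = f + lam • (monom R a * g * monom R b)

/-- `f` can be rewritten to `h` using the set `G`: there is a finite chain of rewriting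
steps, each using an element of `G`, leading from `f` to `h`. -/
def RewritesTo {R X : Type*} [CommRing R] (G : Set (FreeAlg R X)) (f h : FreeAlg R X) : Prop :=
  Relation.ReflTransGen (fun p q => ∃ g ∈ G, RewriteStep g p q) f h

/-- Membership in the two-sided ideal `(F)` generated by `F`:
`f` is a finite sum `Σᵢ aᵢ·fᵢ·bᵢ` with `aᵢ, bᵢ ∈ R⟨X⟩` and `fᵢ ∈ F`. -/
def MemIdeal {R X : Type*} [CommRing R] (F : Set (FreeAlg R X)) (f : FreeAlg R X) : Prop :=
  ∃ (n : ℕ) (a b g : Fin n → FreeAlg R X),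
    (∀ i, g i ∈ F) ∧ f = ∑ i, a i * g i * b i

/-- A labelled quiver `Q = (V, E, X, s, t, l)`: a directed multigraph with vertex set `V`,
edge set `E`, source and target maps `s, t : E → V` and labelling `l : E → X`. -/
structure LabelledQuiver (V E X : Type*) where
  src : E → V
  tgt : E → V
  lab : E → X

/-- Paths in a labelled quiver `Q`; `LQPath Q u w` is the type of paths with source `u` and
target `w`.  `nil v` is the empty path at `v`; `cons e p` appends the edge `e` after `p`. -/
inductive LQPath {V E X : Type*} (Q : LabelledQuiver V E X) : V → V → Type _ where
  | nil (v : V) : LQPath Q v v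
  | cons {u : V} (e : E) (p : LQPath Q u (Q.src e)) : LQPath Q u (Q.tgt e)

namespace LQPath
variable {V E X : Type*} {Q : LabelledQuiver V E X}
/-- The label `l(p) = l(eₙ)⋯l(e₁) ∈ ⟨X⟩` of a path; the empty path has label `1`. -/
def label : {u w : V} → LQPath Q u w → FreeMonoid X
  | _, _, .nil _ => 1
  | _, _, .cons e p => FreeMonoid.of (Q.lab e) * p.label
end LQPath

namespace LabelledQuiver

variable {V E X : Type*} (Q : LabelledQuiver V E X)

/-- The set of signatures `σ(m) = {(s(p), t(p)) : p a path in Q with l(p) = m}`. -/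
def sigmaM (m : FreeMonoid X) : Set (V × V) :=
  {vw | ∃ p : LQPath Q vw.1 vw.2, p.label = m}

variable {R : Type*} [CommRing R]

/-- The set of signatures `σ(f) = ⋂_{m ∈ supp(f)} σ(m)` of a polynomial. -/
def sigmaP (f : FreeAlg R X) : Set (V × V) :=
  ⋂ m ∈ (f.coeff : FreeMonoid X →₀ R).support, Q.sigmaM m

/-- `f` is compatible with `Q` if `σ(f) ≠ ∅`. -/
def Compatible (f : FreeAlg R X) : Prop :=
  (Q.sigmaP f).Nonempty

/-- `f` is uniformly compatible with `Q` if it is compatible and all monomials in its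
support have the same set of signatures. -/
def UniformlyCompatible (f : FreeAlg R X) : Prop :=
  Q.Compatible f ∧
    ∀ m ∈ (f.coeff : FreeMonoid X →₀ R).support, ∀ m' ∈ (f.coeff : FreeMonoid X →₀ R).support,
      Q.sigmaM m = Q.sigmaM m'

/-- The set of sources `s(f)` of a polynomial: the projection of `σ(f)` to the first
component. -/
def srcSet (f : FreeAlg R X) : Set V := Prod.fst '' Q.sigmaP f

/-- The set of targets `t(f)` of a polynomial: the projection of `σ(f)` to the second
component. -/
def tgtSet (f : FreeAlg R X) : Set V := Prod.snd '' Q.sigmaP f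

end LabelledQuiver

/-- `f` is a `Q`-consequence of `F`: `f` is compatible with `Q` and there are finitely many
uniformly compatible `aᵢ, bᵢ` and `fᵢ ∈ F` with `f = Σᵢ aᵢ·fᵢ·bᵢ` where each summand
satisfies `σ(aᵢ·fᵢ·bᵢ) ⊇ σ(f)`. -/
def LabelledQuiver.QConsequence {V E X R : Type*} [CommRing R] (Q : LabelledQuiver V E X)
    (F : Set (FreeAlg R X)) (f : FreeAlg R X) : Prop :=
  Q.Compatible f ∧
    ∃ (n : ℕ) (a b g : Fin n → FreeAlg R X),
      (∀ i, Q.UniformlyCompatible (a i)) ∧ (∀ i, Q.UniformlyCompatible (b i)) ∧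
      (∀ i, g i ∈ F) ∧ f = ∑ i, a i * g i * b i ∧
      ∀ i, Q.sigmaP f ⊆ Q.sigmaP (a i * g i * b i)

section AuxProof

open FreeMonoid

variable {V E X : Type*} {Q : LabelledQuiver V E X}

namespace LQPath

/-- Composition of paths. -/
def comp : {u v w : V} → LQPath Q v w → LQPath Q u v → LQPath Q u w
  | _, _, _, .nil _, q => q
  | _, _, _, .cons e p, q => .cons e (p.comp q)

theorem label_comp {u v w : V} (p : LQPath Q v w) (q : LQPath Q u v) :
    (p.comp q).label = p.label * q.label := by
  induction p with
  | nil => simp [comp, label]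
  | cons e p ih => simp [comp, label, ih, mul_assoc]

theorem split' {u w : V} (p : LQPath Q u w) :
    ∀ l₁ l₂ : List X, p.label.toList = l₁ ++ l₂ →
      ∃ (x : V) (q : LQPath Q x w) (r : LQPath Q u x),
        q.label = ofList l₁ ∧ r.label = ofList l₂ := by
  induction p with
  | nil =>
    intro l₁ l₂ h
    simp only [label, toList_one] at h
    obtain ⟨rfl, rfl⟩ := List.append_eq_nil_iff.mp h.symm
    exact ⟨_, .nil _, .nil _, by simp only [label, ofList_nil], by simp only [label, ofList_nil]⟩
  | cons e p ih =>
    intro l₁ l₂ h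
    rw [label, toList_mul, toList_of, List.singleton_append] at h
    cases l₁ with
    | nil =>
      rw [List.nil_append] at h
      refine ⟨_, .nil _, .cons e p, by simp only [label, ofList_nil], ?_⟩
      rw [← h, ofList_cons, ofList_toList, label]
    | cons x l₁ =>
      rw [List.cons_append] at h
      obtain ⟨h1, h2⟩ := List.cons_eq_cons.mp h
      obtain ⟨y, q, r, hq, hr⟩ := ih l₁ l₂ h2
      refine ⟨y, .cons e q, r, ?_, hr⟩
      rw [label, hq, ← ofList_cons, h1]

theorem split {u w : V} (p : LQPath Q u w) (m₁ m₂ : FreeMonoid X) (h : p.label = m₁ * m₂) :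
    ∃ (x : V) (q : LQPath Q x w) (r : LQPath Q u x), q.label = m₁ ∧ r.label = m₂ := by
  obtain ⟨x, q, r, hq, hr⟩ := p.split' m₁.toList m₂.toList (by rw [h, toList_mul])
  exact ⟨x, q, r, by rw [hq, ofList_toList], by rw [hr, ofList_toList]⟩

end LQPath

namespace LabelledQuiver

theorem sigmaM_mul (Q : LabelledQuiver V E X) (m₁ m₂ : FreeMonoid X) :
    Q.sigmaM (m₁ * m₂) =
      {vw | ∃ x, (vw.1, x) ∈ Q.sigmaM m₂ ∧ (x, vw.2) ∈ Q.sigmaM m₁} := by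
  ext ⟨u, v⟩
  constructor
  · rintro ⟨p, hp⟩
    obtain ⟨x, q, r, hq, hr⟩ := p.split m₁ m₂ hp
    exact ⟨x, ⟨r, hr⟩, ⟨q, hq⟩⟩
  · rintro ⟨x, ⟨r, hr⟩, ⟨q, hq⟩⟩
    exact ⟨q.comp r, by rw [LQPath.label_comp, hq, hr]⟩

/-- The composed signature set `σ(m) ∘ S ∘ σ(w)`. -/
def Tset (Q : LabelledQuiver V E X) (m w : FreeMonoid X) (S : Set (V × V)) : Set (V × V) :=
  {vw | ∃ x y, (vw.1, x) ∈ Q.sigmaM w ∧ (x, y) ∈ S ∧ (y, vw.2) ∈ Q.sigmaM m}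

theorem sigmaM_conj (Q : LabelledQuiver V E X) (m mg w : FreeMonoid X) :
    Q.sigmaM (m * mg * w) = Q.Tset m w (Q.sigmaM mg) := by
  rw [Q.sigmaM_mul (m * mg) w]
  ext ⟨u, v⟩
  constructor
  · rintro ⟨x, hw, hx⟩
    rw [Q.sigmaM_mul m mg] at hx
    obtain ⟨y, hy, hm⟩ := hx
    exact ⟨x, y, hw, hy, hm⟩
  · rintro ⟨x, y, hw, hS, hm⟩
    refine ⟨x, hw, ?_⟩
    rw [Q.sigmaM_mul m mg]
    exact ⟨y, hS, hm⟩

theorem Tset_nonempty {Q : LabelledQuiver V E X} {m w : FreeMonoid X} {S : Set (V × V)}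
    (h : (Q.Tset m w S).Nonempty) :
    (Q.sigmaM m).Nonempty ∧ (Q.sigmaM w).Nonempty := by
  obtain ⟨⟨u, v⟩, x, y, hw, _, hm⟩ := h
  exact ⟨⟨(y, v), hm⟩, ⟨(u, x), hw⟩⟩

variable {R : Type*} [CommRing R]

theorem sigmaP_subset_of_mem {Q : LabelledQuiver V E X} {f : FreeAlg R X} {μ : FreeMonoid X}
    (h : μ ∈ (f.coeff : FreeMonoid X →₀ R).support) : Q.sigmaP f ⊆ Q.sigmaM μ :=
  Set.biInter_subset_of_mem h

theorem subset_sigmaP {Q : LabelledQuiver V E X} {f : FreeAlg R X} {s : Set (V × V)}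
    (h : ∀ μ ∈ (f.coeff : FreeMonoid X →₀ R).support, s ⊆ Q.sigmaM μ) : s ⊆ Q.sigmaP f :=
  Set.subset_iInter₂ h

theorem sigmaP_eq_of_uc {Q : LabelledQuiver V E X} {g : FreeAlg R X}
    (h : Q.UniformlyCompatible g) {mg : FreeMonoid X}
    (hmg : mg ∈ (g.coeff : FreeMonoid X →₀ R).support) : Q.sigmaP g = Q.sigmaM mg := by
  refine Set.Subset.antisymm (sigmaP_subset_of_mem hmg) (subset_sigmaP fun m' hm' => ?_)
  exact (h.2 mg hmg m' hm').le

theorem uc_single (Q : LabelledQuiver V E X) (m : FreeMonoid X) {c : R} (hc : c ≠ 0)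
    (hne : (Q.sigmaM m).Nonempty) :
    Q.UniformlyCompatible (MonoidAlgebra.single m c : FreeAlg R X) := by
  have hs : (MonoidAlgebra.single m c : FreeAlg R X).coeff.support = {m} :=
    Finsupp.support_single_ne_zero _ hc
  have hsp : Q.sigmaP (MonoidAlgebra.single m c : FreeAlg R X) = Q.sigmaM m := by
    rw [LabelledQuiver.sigmaP, hs]
    simp
  constructor
  · rw [LabelledQuiver.Compatible, hsp]; exact hne
  · rw [hs]
    intro m₁ hm₁ m₂ hm₂
    rw [Finset.mem_singleton] at hm₁ hm₂
    rw [hm₁, hm₂]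

end LabelledQuiver

theorem conj_eq {R X : Type*} [CommRing R] (m w : FreeMonoid X) (c d : R) (g : FreeAlg R X) :
    (MonoidAlgebra.single m c * g * MonoidAlgebra.single w d).coeff
      = Finsupp.mapDomain (fun x => m * x * w) ((c * d) • g).coeff := by
  induction g using MonoidAlgebra.induction_linear with
  | zero => simp
  | add f h hf hh =>
    simp only [mul_add, add_mul, smul_add, MonoidAlgebra.coeff_add, Finsupp.mapDomain_add, hf, hh]
  | single a r =>
    rw [MonoidAlgebra.single_mul_single, MonoidAlgebra.single_mul_single]
    have : ((c * d) • (MonoidAlgebra.single a r : FreeAlg R X)).coeff = Finsupp.single a ((c * d) * r) :=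
      Finsupp.smul_single' _ _ _
    rw [this, Finsupp.mapDomain_single, MonoidAlgebra.coeff_single]
    congr 1
    ring

theorem expand_prod {R X : Type*} [CommRing R] (a g b : FreeAlg R X) :
    a * g * b = ∑ m ∈ a.coeff.support, ∑ w ∈ b.coeff.support,
      MonoidAlgebra.single m (a.coeff m) * g * MonoidAlgebra.single w (b.coeff w) := by
  conv_lhs => rw [← MonoidAlgebra.sum_coeff_single a, ← MonoidAlgebra.sum_coeff_single b]
  rw [Finsupp.sum, Finsupp.sum, Finset.sum_mul, Finset.sum_mul]
  refine Finset.sum_congr rfl fun m _ => ?_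
  rw [Finset.mul_sum]

end AuxProof
/-- Let `f` lie in the two-sided ideal generated by `F`. Then for every
labelled quiver `Q` such that all elements of `F` are uniformly compatible with `Q`,
`f` is compatible with `Q` if and only if `f` is a `Q`-consequence of `F`. -/
theorem compatible_iff_qConsequence {R X : Type*} [CommRing R]
    (F : Set (FreeAlg R X)) (f : FreeAlg R X) (hf : MemIdeal F f)
    {V E : Type*} (Q : LabelledQuiver V E X) (hF : ∀ g ∈ F, Q.UniformlyCompatible g) :
    Q.Compatible f ↔ Q.QConsequence F f := by
  classical
  refine ⟨fun hc => ?_, fun h => h.1⟩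
  obtain ⟨n, a, b, g, hgF, hfe⟩ := hf
  set term : ((_ : Fin n) × FreeMonoid X × FreeMonoid X) → FreeAlg R X :=
    fun x => MonoidAlgebra.single x.2.1 ((a x.1).coeff x.2.1) * g x.1 *
      MonoidAlgebra.single x.2.2 ((b x.1).coeff x.2.2) with hterm
  set T : ((_ : Fin n) × FreeMonoid X × FreeMonoid X) → Set (V × V) :=
    fun x => Q.Tset x.2.1 x.2.2 (Q.sigmaP (g x.1)) with hT
  set s0 : Finset ((_ : Fin n) × FreeMonoid X × FreeMonoid X) :=
    Finset.univ.sigma (fun i => (a i).coeff.support ×ˢ (b i).coeff.support) with hs0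
  -- Step A : expand `f` as a sum of monomial sandwich terms
  have hA : f = ∑ x ∈ s0, term x := by
    rw [hfe, hs0, Finset.sum_sigma]
    refine Finset.sum_congr rfl fun i _ => ?_
    rw [Finset.sum_product]
    exact expand_prod (a i) (g i) (b i)
  -- every monomial in the support of a term has signature set `T x`
  have hsupp : ∀ x ∈ s0, ∀ μ ∈ (term x).coeff.support, Q.sigmaM μ = T x := by
    rintro ⟨i, m, w⟩ _ μ hμ
    simp only [hterm] at hμ
    rw [conj_eq] at hμ
    obtain ⟨mg, hmg, rfl⟩ := Finset.mem_image.mp (Finsupp.mapDomain_support hμ)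
    have hmg' : mg ∈ (g i).coeff.support := Finsupp.support_smul hmg
    rw [Q.sigmaM_conj, hT]
    simp only
    rw [LabelledQuiver.sigmaP_eq_of_uc (hF _ (hgF i)) hmg']
  set good : Finset ((_ : Fin n) × FreeMonoid X × FreeMonoid X) :=
    s0.filter (fun x => Q.sigmaP f ⊆ T x) with hgood
  -- Step C : the bad terms cancel
  have hC : f = ∑ x ∈ good, term x := by
    ext μ
    rw [MonoidAlgebra.coeff_sum, Finsupp.finset_sum_apply]
    by_cases hμ : Q.sigmaP f ⊆ Q.sigmaM μ
    · have he : ∑ x ∈ good, (term x).coeff μ = ∑ x ∈ s0, (term x).coeff μ := by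
        rw [hgood]
        refine Finset.sum_filter_of_ne fun x hx hne => ?_
        rw [← hsupp x hx μ (Finsupp.mem_support_iff.mpr hne)]
        exact hμ
      rw [he, ← Finsupp.finset_sum_apply, ← MonoidAlgebra.coeff_sum, ← hA]
    · have h1 : f.coeff μ = 0 := by
        by_contra h
        exact hμ (LabelledQuiver.sigmaP_subset_of_mem (Finsupp.mem_support_iff.mpr h))
      rw [h1]
      refine (Finset.sum_eq_zero fun x hx => ?_).symm
      by_contra h
      have hTx := (Finset.mem_filter.mp hx).2
      rw [← hsupp x (Finset.mem_filter.mp hx).1 μ (Finsupp.mem_support_iff.mpr h)] at hTx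
      exact hμ hTx
  -- Step D : assemble the data
  set N := good.card with hN
  set e : {x // x ∈ good} ≃ Fin N := good.equivFin with he
  set key : Fin N → ((_ : Fin n) × FreeMonoid X × FreeMonoid X) := fun j => (e.symm j : _)
    with hkey
  have hkg : ∀ j, key j ∈ good := fun j => (e.symm j).2
  have hks : ∀ j, key j ∈ s0 := fun j => (Finset.mem_filter.mp (hkg j)).1
  have hkT : ∀ j, Q.sigmaP f ⊆ T (key j) := fun j => (Finset.mem_filter.mp (hkg j)).2
  have hTne : ∀ j, (T (key j)).Nonempty := fun j => hc.mono (hkT j)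
  have hmem : ∀ j, (key j).2.1 ∈ (a (key j).1).coeff.support ∧ (key j).2.2 ∈ (b (key j).1).coeff.support := by
    intro j
    have := hks j
    rw [hs0, Finset.mem_sigma] at this
    exact Finset.mem_product.mp this.2
  refine ⟨hc, N, fun j => MonoidAlgebra.single (key j).2.1 ((a (key j).1).coeff (key j).2.1),
    fun j => MonoidAlgebra.single (key j).2.2 ((b (key j).1).coeff (key j).2.2),
    fun j => g (key j).1, ?_, ?_, fun j => hgF _, ?_, ?_⟩
  · intro j
    refine Q.uc_single _ (Finsupp.mem_support_iff.mp (hmem j).1) ?_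
    exact (LabelledQuiver.Tset_nonempty (hTne j)).1
  · intro j
    refine Q.uc_single _ (Finsupp.mem_support_iff.mp (hmem j).2) ?_
    exact (LabelledQuiver.Tset_nonempty (hTne j)).2
  · rw [hC]
    rw [← Finset.sum_coe_sort good term]
    exact (Equiv.sum_comp e.symm (fun x : {x // x ∈ good} => term x)).symm
  · intro j
    refine LabelledQuiver.subset_sigmaP fun μ hμ => ?_
    have : μ ∈ (term (key j)).coeff.support := hμ
    rw [hsupp _ (hks j) μ this]
    exact hkT j
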